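/- (Monotonicity of the optimal trace ratio) Let B be symmetric and W symmetric positive definite, both p x p. For 1 <= k <= p, define rho^(k) = max over p x k matrices V with V^T V = I_k of tr(V^T B V)/tr(V^T W V). Then rho^(k) is a non-increasing function of k, i.e., rho^(k+1) <= rho^(k) for all 1 <= k <= p-1. -/

import Mathlib

open Matrix
open Finset

/-- Monotonicity of the optimal trace ratio: with `B` symmetric and `W` SPD, if
`ρ k` is the maximum of `tr(Vᵀ B V)/tr(Vᵀ W V)` over `p × k` matrices `V` with
orthonormal columns, then `ρ (k+1) ≤ ρ k` for `1 ≤ k ≤ p - 1`. -/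
theorem trace_ratio_optimal_value_nonincreasing {p : ℕ}
    (B W : Matrix (Fin p) (Fin p) ℝ) (hB : B.IsSymm) (hW : W.PosDef)
    (rho : ℕ → ℝ)
    (hrho : ∀ k, 1 ≤ k → k ≤ p →
      IsGreatest {r : ℝ | ∃ V : Matrix (Fin p) (Fin k) ℝ,
        Vᵀ * V = 1 ∧ r = Matrix.trace (Vᵀ * B * V) / Matrix.trace (Vᵀ * W * V)}
        (rho k)) :
    ∀ k, 1 ≤ k → k + 1 ≤ p → rho (k + 1) ≤ rho k := by
  intro k hk1 hkp
  obtain ⟨⟨V, hV, hval⟩, -⟩ := hrho (k+1) (by omega) hkp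
  set b : Fin (k+1) → ℝ := fun j => (Vᵀ * B * V) j j with hb
  set w : Fin (k+1) → ℝ := fun j => (Vᵀ * W * V) j j with hw
  have htrB : Matrix.trace (Vᵀ * B * V) = ∑ j, b j := rfl
  have htrW : Matrix.trace (Vᵀ * W * V) = ∑ j, w j := rfl
  -- positivity of each w j
  have hwpos : ∀ j, 0 < w j := by
    intro j
    have hvne : (fun i => V i j) ≠ 0 := by
      intro h
      have h1 : (Vᵀ * V) j j = 1 := by rw [hV]; simp
      have : (Vᵀ * V) j j = ∑ i, V i j * V i j := by
        simp [Matrix.mul_apply]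
      rw [this] at h1
      simp [funext_iff] at h
      simp [h] at h1
    have : (0:ℝ) < star (fun i => V i j) ⬝ᵥ (W *ᵥ fun i => V i j) := hW.dotProduct_mulVec_pos hvne
    convert this using 1
    simp only [hw, Matrix.mul_apply, dotProduct, mulVec, Matrix.transpose_apply,
      Finset.sum_mul, Finset.mul_sum]
    rw [Finset.sum_comm]
    exact Finset.sum_congr rfl fun a _ => Finset.sum_congr rfl fun i _ => by simp [star]; ring
  -- deleted-column ratios bounded by rho k
  have hsub : ∀ j : Fin (k+1),
      (∑ l : Fin k, b (j.succAbove l)) / (∑ l : Fin k, w (j.succAbove l)) ≤ rho k := by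
    intro j
    apply (hrho k hk1 (by omega)).2
    refine ⟨V.submatrix id j.succAbove, ?_, ?_⟩
    · ext a c
      have h1 : (Vᵀ * V) (j.succAbove a) (j.succAbove c) = (1 : Matrix (Fin (k+1)) (Fin (k+1)) ℝ) (j.succAbove a) (j.succAbove c) := by rw [hV]
      simp only [Matrix.mul_apply, Matrix.transpose_apply] at h1 ⊢
      simp only [Matrix.submatrix_apply, id]
      rw [h1]
      by_cases hac : a = c
      · subst hac; simp
      · rw [Matrix.one_apply_ne, Matrix.one_apply_ne hac]
        exact fun h => hac (Fin.succAbove_right_injective h)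
    · have e : ∀ A : Matrix (Fin p) (Fin p) ℝ,
          Matrix.trace ((V.submatrix id j.succAbove)ᵀ * A * V.submatrix id j.succAbove)
            = ∑ l : Fin k, (Vᵀ * A * V) (j.succAbove l) (j.succAbove l) := by
        intro A
        simp [Matrix.trace, Matrix.diag, Matrix.mul_apply]
      rw [e, e]
  -- positivity of partial sums of w
  have hwsumpos : ∀ j : Fin (k+1), 0 < ∑ l : Fin k, w (j.succAbove l) := by
    intro j
    apply Finset.sum_pos (fun l _ => hwpos _)
    exact Finset.univ_nonempty_iff.2 (Fin.pos_iff_nonempty.1 (by omega))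
  have hSw : (0:ℝ) < ∑ i, w i := Finset.sum_pos (fun i _ => hwpos i) Finset.univ_nonempty
  -- linearize each bound
  have hlin : ∀ j : Fin (k+1),
      (∑ l : Fin k, b (j.succAbove l)) ≤ rho k * (∑ l : Fin k, w (j.succAbove l)) := by
    intro j
    have := (div_le_iff₀ (hwsumpos j)).1 (hsub j)
    linarith [this]
  -- sum over j
  have hsum : ∑ j : Fin (k+1), (∑ l : Fin k, b (j.succAbove l))
      ≤ rho k * ∑ j : Fin (k+1), (∑ l : Fin k, w (j.succAbove l)) := by
    rw [Finset.mul_sum]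
    exact Finset.sum_le_sum fun j _ => hlin j
  have hident : ∀ f : Fin (k+1) → ℝ,
      ∑ j : Fin (k+1), (∑ l : Fin k, f (j.succAbove l)) = k * ∑ i, f i := by
    intro f
    have : ∀ j : Fin (k+1), ∑ l : Fin k, f (j.succAbove l) = (∑ i, f i) - f j := by
      intro j
      rw [Fin.sum_univ_succAbove f j]; ring
    simp only [this, Finset.sum_sub_distrib, Finset.sum_const, Finset.card_univ,
      Fintype.card_fin, nsmul_eq_mul]
    push_cast; ring
  rw [hident b, hident w] at hsum
  have hk0 : (0:ℝ) < k := by exact_mod_cast hk1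
  have hfin : (∑ i, b i) ≤ rho k * ∑ i, w i := by
    have : (k:ℝ) * ∑ i, b i ≤ (k:ℝ) * (rho k * ∑ i, w i) := by linarith [hsum]
    exact le_of_mul_le_mul_left this hk0
  rw [hval, htrB, htrW]
  exact (div_le_iff₀ hSw).2 (by linarith)
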